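/- For every fixed integer m ≥ 1, as n → ∞ one has φ³_{n,m} ~ C³_m · (256/27)^n · n^{-5/2}, i.e. lim_{n→∞} φ³_{n,m} · (27/256)^n · n^{5/2} = C³_m, where C³_m = ((2m+1)! / (3√(6π) · (m−1)! · (m+1)!)) · (16/9)^m. -/

import Mathlib

/-- The number of rooted type III triangulations of a disc with m+2 boundary
vertices and n internal vertices (for m ≥ 1). -/
noncomputable def phi3 (n m : ℕ) : ℝ :=
  (2 * Nat.factorial (2 * m + 1) * Nat.factorial (4 * n + 2 * m - 1) : ℝ) /
    (Nat.factorial (m - 1) * Nat.factorial (m + 1) * Nat.factorial n *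
      Nat.factorial (3 * n + 2 * m + 1))

/-- The constant C³_m. -/
noncomputable def C3 (m : ℕ) : ℝ :=
  (Nat.factorial (2 * m + 1) : ℝ) /
    (3 * Real.sqrt (6 * Real.pi) * Nat.factorial (m - 1) * Nat.factorial (m + 1)) *
    (16 / 9) ^ m

open Filter Real Topology

namespace Phi3Aux

noncomputable def s := Stirling.stirlingSeq

lemma s_pos {k : ℕ} (hk : 1 ≤ k) : 0 < s k := by
  obtain ⟨j, rfl⟩ : ∃ j, k = j + 1 := ⟨k - 1, by omega⟩
  exact Stirling.stirlingSeq'_pos j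

lemma tendsto_s' : Tendsto (fun n : ℕ => s n) atTop (𝓝 (Real.sqrt π)) :=
  Stirling.tendsto_stirlingSeq_sqrt_pi

lemma fact_eq {k : ℕ} (hk : 1 ≤ k) :
    (Nat.factorial k : ℝ) = s k * (Real.sqrt (2 * k) * ((k : ℝ) / Real.exp 1) ^ k) := by
  have hk' : (0:ℝ) < k := by exact_mod_cast hk
  have h1 : (0:ℝ) < Real.sqrt (2 * k) := Real.sqrt_pos.mpr (by positivity)
  have h2 : (0:ℝ) < ((k:ℝ) / Real.exp 1) ^ k := pow_pos (div_pos hk' (Real.exp_pos 1)) k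
  rw [s, Stirling.stirlingSeq, div_mul_cancel₀]
  exact (mul_pos h1 h2).ne'

lemma Pj (k : ℕ) :
    Tendsto (fun j : ℕ => (((j : ℝ) + k) / j) ^ (j + k)) atTop (𝓝 (Real.exp k)) := by
  have h2 : Tendsto (fun j : ℕ => (1 + (k : ℝ) / j)) atTop (𝓝 1) := by
    simpa using tendsto_const_nhds.add (tendsto_const_div_atTop_nhds_zero_nat (k : ℝ))
  have h3 := (Real.tendsto_one_add_div_pow_exp (k : ℝ)).mul (h2.pow k)
  rw [one_pow, mul_one] at h3
  refine h3.congr' ?_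
  filter_upwards [eventually_ge_atTop 1] with j hj
  have hj0 : (j : ℝ) ≠ 0 := Nat.cast_ne_zero.mpr (by omega)
  have hbase : 1 + (k : ℝ) / j = ((j : ℝ) + k) / j := by field_simp
  rw [hbase, ← pow_add]

lemma tendsto_mul_atTop (c d : ℕ) (hc : 1 ≤ c) :
    Tendsto (fun n : ℕ => c * n + d) atTop atTop :=
  tendsto_atTop_mono (fun n => le_trans (by simpa using Nat.mul_le_mul_right n hc) (Nat.le_add_right _ _)) tendsto_id

lemma tendsto_s (c d : ℕ) (hc : 1 ≤ c) :
    Tendsto (fun n : ℕ => s (c * n + d)) atTop (𝓝 (Real.sqrt π)) :=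
  Stirling.tendsto_stirlingSeq_sqrt_pi.comp (tendsto_mul_atTop c d hc)

lemma P_lim (c k : ℕ) (hc : 1 ≤ c) :
    Tendsto (fun n : ℕ => ((c * (n : ℝ) + k) / (c * n)) ^ (c * n + k)) atTop
      (𝓝 (Real.exp k)) := by
  have h := (Pj k).comp (tendsto_mul_atTop c 0 hc)
  refine h.congr fun n => ?_
  simp only [Function.comp]
  push_cast
  ring_nf

end Phi3Aux

set_option maxHeartbeats 1000000 in
open Phi3Aux in
/-- φ³_{n,m} ~ C³_m · (256/27)^n · n^{-5/2} as n → ∞, for fixed m ≥ 1. -/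
theorem phi3_asymptotics (m : ℕ) (hm : 1 ≤ m) :
    Filter.Tendsto
      (fun n : ℕ => phi3 n m * (27 / 256 : ℝ) ^ n * (n : ℝ) ^ ((5 : ℝ) / 2))
      Filter.atTop (nhds (C3 m)) := by
  obtain ⟨p, rfl⟩ : ∃ p, m = p + 1 := ⟨m - 1, by omega⟩
  set K : ℝ := 2 * Nat.factorial (2 * p + 3) /
    (Nat.factorial p * Nat.factorial (p + 2)) with hK
  have hπ : (0:ℝ) < Real.sqrt π := Real.sqrt_pos.mpr Real.pi_pos
  -- limit of F
  have hlimF : Tendsto (fun n : ℕ =>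
      K * (s (4 * n + (2 * p + 1)) / (s n * s (3 * n + (2 * p + 3))))
        * Real.sqrt ((4 * (n:ℝ) + (2*p+1)) / (2 * (3 * (n:ℝ) + (2*p+3))))
        * (Real.exp 1 ^ 2 * (4:ℝ) ^ (2*p+1) / (3:ℝ) ^ (2*p+3)
           * ((4 * (n:ℝ) + (2*p+1)) / (4 * n)) ^ (4*n + (2*p+1))
           / ((3 * (n:ℝ) + (2*p+3)) / (3 * n)) ^ (3*n + (2*p+3))))
      atTop (𝓝 (C3 (p+1))) := by
    have hT1 : Tendsto (fun n => s (4 * n + (2*p+1)) / (s n * s (3 * n + (2*p+3))))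
        atTop (𝓝 (Real.sqrt π / (Real.sqrt π * Real.sqrt π))) :=
      (tendsto_s 4 (2*p+1) (by norm_num)).div
        (tendsto_s'.mul (tendsto_s 3 (2*p+3) (by norm_num)))
        (by positivity)
    have hT2 : Tendsto (fun n : ℕ => (4 * (n:ℝ) + (2*p+1)) / (2 * (3 * (n:ℝ) + (2*p+3))))
        atTop (𝓝 (2/3)) := by
      have h4 : Tendsto (fun n : ℕ => (4 : ℝ) + (2*(p:ℝ)+1) / n) atTop (𝓝 4) := by
        simpa using tendsto_const_nhds.add (tendsto_const_div_atTop_nhds_zero_nat (2*(p:ℝ)+1))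
      have h6 : Tendsto (fun n : ℕ => (6 : ℝ) + (4*(p:ℝ)+6) / n) atTop (𝓝 6) := by
        simpa using tendsto_const_nhds.add (tendsto_const_div_atTop_nhds_zero_nat (4*(p:ℝ)+6))
      have h := h4.div h6 (by norm_num)
      rw [show (4:ℝ)/6 = 2/3 by norm_num] at h
      refine h.congr' ?_
      filter_upwards [eventually_ge_atTop 1] with n hn
      have hn0 : (n:ℝ) ≠ 0 := Nat.cast_ne_zero.mpr (by omega)
      have hn1 : (0:ℝ) < (n:ℝ) := by positivity
      simp only [Pi.div_apply]
      rw [div_eq_div_iff (by positivity) (by positivity)]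
      field_simp
      ring_nf
      try exact Or.inl trivial
    have hP := P_lim 4 (2*p+1) (by norm_num)
    have hQ := P_lim 3 (2*p+3) (by norm_num)
    push_cast at hP hQ
    have hT3 : Tendsto (fun n : ℕ =>
        Real.exp 1 ^ 2 * (4:ℝ) ^ (2*p+1) / (3:ℝ) ^ (2*p+3)
          * ((4 * (n:ℝ) + (2*p+1)) / (4 * n)) ^ (4*n + (2*p+1))
          / ((3 * (n:ℝ) + (2*p+3)) / (3 * n)) ^ (3*n + (2*p+3))) atTop
        (𝓝 (Real.exp 1 ^ 2 * (4:ℝ) ^ (2*p+1) / (3:ℝ) ^ (2*p+3)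
          * Real.exp (2*p+1) / Real.exp (2*p+3))) :=
      (tendsto_const_nhds.mul hP).div hQ (Real.exp_ne_zero _)
    have hall := ((tendsto_const_nhds (x := K)).mul hT1).mul (hT2.sqrt) |>.mul hT3
    have hval : K * (Real.sqrt π / (Real.sqrt π * Real.sqrt π)) * Real.sqrt (2/3)
        * (Real.exp 1 ^ 2 * (4:ℝ) ^ (2*p+1) / (3:ℝ) ^ (2*p+3)
          * Real.exp (2*p+1) / Real.exp (2*p+3)) = C3 (p+1) := by
      have h6π : (0:ℝ) < Real.sqrt (6*π) := Real.sqrt_pos.mpr (by positivity)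
      have h23 : Real.sqrt ((2:ℝ)/3) = 2 / Real.sqrt 6 := by
        rw [show (2:ℝ)/3 = 4/6 by norm_num, Real.sqrt_div (by norm_num : (0:ℝ) ≤ 4),
          show (4:ℝ) = 2^2 by norm_num, Real.sqrt_sq (by norm_num : (0:ℝ) ≤ 2)]
      have hsplit : Real.sqrt (6*π) = Real.sqrt 6 * Real.sqrt π :=
        Real.sqrt_mul (by norm_num) π
      have h60 : Real.sqrt 6 ≠ 0 := by
        have : (0:ℝ) < Real.sqrt 6 := Real.sqrt_pos.mpr (by norm_num)
        exact this.ne'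
      have h169 : ((16:ℝ)/9)^(p+1) = 4^(2*p+2)/3^(2*p+2) := by
        rw [div_pow, show (16:ℝ)=4^2 by norm_num, show (9:ℝ)=3^2 by norm_num, ← pow_mul,
          ← pow_mul, show 2*(p+1)=2*p+2 from by ring]
      have hexp' : Real.exp 2 * Real.exp (2*(p:ℝ)+1) = Real.exp (2*(p:ℝ)+3) := by
        rw [← Real.exp_add]; congr 1; ring
      have he2 : Real.exp 1 ^ 2 = Real.exp 2 := by
        rw [← Real.exp_nat_mul]; norm_num
      have hf1 : (Nat.factorial p : ℝ) ≠ 0 := Nat.cast_ne_zero.mpr (Nat.factorial_ne_zero p)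
      have hf2 : (Nat.factorial (p+2) : ℝ) ≠ 0 := Nat.cast_ne_zero.mpr (Nat.factorial_ne_zero _)
      have he0 : Real.exp (2*(p:ℝ)+1) ≠ 0 := Real.exp_ne_zero _
      simp only [C3, Nat.add_sub_cancel, show 2*(p+1)+1 = 2*p+3 from by omega, h169, hK,
        he2, ← hexp', h23, hsplit]
      field_simp
      ring_nf
    rw [hval] at hall
    exact hall
  -- eventual equality
  refine hlimF.congr' ?_
  filter_upwards [eventually_ge_atTop 1] with n hn
  have hn0 : (0:ℝ) < (n:ℝ) := by
    have : (1:ℝ) ≤ (n:ℝ) := by exact_mod_cast hn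
    linarith
  have e1 : 4*n+2*(p+1)-1 = 4*n+(2*p+1) := by omega
  have e2 : 3*n+2*(p+1)+1 = 3*n+(2*p+3) := by omega
  have e3 : 2*(p+1)+1 = 2*p+3 := by omega
  have e4 : p+1-1 = p := by omega
  have e5 : p+1+1 = p+2 := by omega
  rw [phi3, e1, e2, e3, e4, e5,
    fact_eq (show 1 ≤ 4*n+(2*p+1) by omega), fact_eq hn,
    fact_eq (show 1 ≤ 3*n+(2*p+3) by omega)]
  rw [show ((n:ℝ))^((5:ℝ)/2) = Real.sqrt n * (n:ℝ)^(2:ℕ) from by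
    rw [show (5:ℝ)/2 = 1/2 + ((2:ℕ):ℝ) by norm_num, Real.rpow_add hn0,
      Real.rpow_natCast, ← Real.sqrt_eq_rpow]]
  rw [show ((27:ℝ)/256)^n = 3^(3*n) / 4^(4*n) from by
    rw [show (27:ℝ)/256 = 3^3/4^4 by norm_num, div_pow, ← pow_mul, ← pow_mul]]
  rw [Real.sqrt_div (by positivity : (0:ℝ) ≤ 4*(n:ℝ)+(2*(p:ℝ)+1))]
  simp only [Real.sqrt_mul (show (0:ℝ) ≤ 2 by norm_num)]
  push_cast
  have hsn : s n ≠ 0 := (s_pos hn).ne'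
  have hsa : s (4*n+(2*p+1)) ≠ 0 := (s_pos (by omega)).ne'
  have hsb : s (3*n+(2*p+3)) ≠ 0 := (s_pos (by omega)).ne'
  set E := Real.exp 1 with hE
  have hex : E ≠ 0 := Real.exp_ne_zero 1
  have h2 : Real.sqrt 2 ≠ 0 := (Real.sqrt_pos.mpr (by norm_num)).ne'
  have hqn : Real.sqrt (n:ℝ) ≠ 0 := (Real.sqrt_pos.mpr hn0).ne'
  have hqa : Real.sqrt (4*(n:ℝ)+(2*(p:ℝ)+1)) ≠ 0 := (Real.sqrt_pos.mpr (by positivity)).ne'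
  have hqb : Real.sqrt (3*(n:ℝ)+(2*(p:ℝ)+3)) ≠ 0 := (Real.sqrt_pos.mpr (by positivity)).ne'
  have hba : (4*(n:ℝ)+(2*(p:ℝ)+1)) ≠ 0 := by positivity
  have hbb : (3*(n:ℝ)+(2*(p:ℝ)+3)) ≠ 0 := by positivity
  have hn' : (n:ℝ) ≠ 0 := hn0.ne'
  have hf1 : (Nat.factorial p : ℝ) ≠ 0 := Nat.cast_ne_zero.mpr (Nat.factorial_ne_zero p)
  have hf2 : (Nat.factorial (p+2) : ℝ) ≠ 0 := Nat.cast_ne_zero.mpr (Nat.factorial_ne_zero _)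
  have hf3 : (Nat.factorial (2*p+3) : ℝ) ≠ 0 := Nat.cast_ne_zero.mpr (Nat.factorial_ne_zero _)
  rw [hK]
  simp only [div_pow, mul_pow]
  field_simp [hsn, hsa, hsb, hex, h2, hqn, hqa, hqb, hba, hbb, hn', hf1, hf2, hf3]
  ring
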